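/- Let M be a simple rank-3 matroid on n elements with no coloops. Then (n−2)·c̄₁²(M) ≥ (2n−6)·c̄₂(M), i.e. c̄₁²(M)/c̄₂(M) ≥ (2n−6)/(n−2), with equality if and only if M is the uniform matroid U_{3,n}. -/

import Mathlib

/- Chern numbers of matroids (Mannino). Background definitions. -/

open scoped Matroid
open Finset

namespace Paper

variable {α : Type*}

/-- The rank of a set in a matroid: the maximal size of an independent subset. -/
noncomputable def mrk (M : Matroid α) (X : Set α) : ℕ :=
  sSup (Set.ncard '' {I | M.Indep I ∧ I ⊆ X})

/-- A matroid is simple if it has no loops and no parallel pairs, i.e. every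
subset of the ground set with at most two elements is independent. -/
def Simple (M : Matroid α) : Prop := ∀ e ∈ M.E, ∀ f ∈ M.E, M.Indep {e, f}

/-- A matroid is loopless if every singleton of the ground set is independent. -/
def Loopless (M : Matroid α) : Prop := ∀ e ∈ M.E, M.Indep {e}

/-- A coloop is an element contained in every base. -/
def Coloop (M : Matroid α) (e : α) : Prop := e ∈ M.E ∧ ∀ B, M.IsBase B → e ∈ B

/-- `t M m` is the number of rank-2 flats of `M` of size `m`. -/
noncomputable def t (M : Matroid α) (m : ℕ) : ℕ :=
  {F : Set α | M.IsFlat F ∧ mrk M F = 2 ∧ F.ncard = m}.ncard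

/-- The first Chern number `c̄₁²` of a simple rank-3 matroid,
`9 - 5n + ∑_{m ≥ 2} (3m-4) t_m`. -/
noncomputable def c1sq (M : Matroid α) : ℤ :=
  9 - 5 * (M.E.ncard : ℤ) +
    ∑ m ∈ Finset.Icc 2 M.E.ncard, (3 * (m : ℤ) - 4) * t M m

/-- The second Chern number `c̄₂` of a simple rank-3 matroid,
`3 - 2n + ∑_{m ≥ 2} (m-1) t_m`. -/
noncomputable def c2 (M : Matroid α) : ℤ :=
  3 - 2 * (M.E.ncard : ℤ) +
    ∑ m ∈ Finset.Icc 2 M.E.ncard, ((m : ℤ) - 1) * t M m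

/-- The beta invariant of a matroid on a finite type (Crapo's formula):
`β(M) = (-1)^{r(E)} ∑_{S ⊆ E} (-1)^{|S|} r(S)`. -/
noncomputable def beta (M : Matroid α) [Fintype α] : ℤ :=
  (-1) ^ (mrk M M.E) *
    ∑ S ∈ (Set.toFinite M.E).toFinset.powerset,
      (-1 : ℤ) ^ S.card * (mrk M (S : Set α) : ℤ)

/-- `M` is the uniform matroid of rank `r` on its ground set: the independent
sets are exactly the finite subsets of the ground set of size at most `r`. -/
def IsUniform (M : Matroid α) (r : ℕ) : Prop :=
  ∀ I, I ⊆ M.E → (M.Indep I ↔ I.Finite ∧ I.ncard ≤ r)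

section Aux

variable {M : Matroid α} {X I J F : Set α} {e f g : α}

lemma basis_encard_eq (h1 : M.IsBasis I X) (h2 : M.IsBasis J X) : I.encard = J.encard :=
  h1.restrict_isBase.encard_eq_encard_of_isBase h2.restrict_isBase

lemma closure_flat' (M : Matroid α) (X : Set α) : M.IsFlat (M.closure X) := by
  rw [Matroid.closure_def]
  have hne : Nonempty {F // F ∈ {F | M.IsFlat F ∧ X ∩ M.E ⊆ F}} :=
    ⟨⟨M.E, M.ground_isFlat, Set.inter_subset_right⟩⟩
  rw [Set.sInter_eq_iInter]
  exact Matroid.IsFlat.iInter fun i => i.2.1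

lemma mrk_eq_of_basis (hE : M.E.Finite) (h : M.IsBasis I X) : mrk M X = I.ncard := by
  have hXE : X ⊆ M.E := h.subset_ground
  have hub : ∀ k ∈ Set.ncard '' {J | M.Indep J ∧ J ⊆ X}, k ≤ I.ncard := by
    rintro k ⟨J, ⟨hJi, hJX⟩, rfl⟩
    obtain ⟨J', hJ', hJJ'⟩ := hJi.subset_isBasis_of_subset hJX hXE
    have hc : J'.ncard = I.ncard := by
      rw [Set.ncard_def, Set.ncard_def, basis_encard_eq hJ' h]
    exact hc ▸ Set.ncard_le_ncard hJJ' (hE.subset hJ'.indep.subset_ground)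
  exact le_antisymm (csSup_le ⟨I.ncard, ⟨I, ⟨h.indep, h.subset⟩, rfl⟩⟩ hub)
    (le_csSup ⟨I.ncard, hub⟩ ⟨I, ⟨h.indep, h.subset⟩, rfl⟩)

lemma ncard_le_mrk (hE : M.E.Finite) (hJ : M.Indep J) (hJX : J ⊆ X) (hX : X ⊆ M.E) :
    J.ncard ≤ mrk M X := by
  obtain ⟨I, hI⟩ := M.exists_isBasis X hX
  rw [mrk_eq_of_basis hE hI]
  obtain ⟨J', hJ', hJJ'⟩ := hJ.subset_isBasis_of_subset hJX hX
  have hc : J'.ncard = I.ncard := by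
    rw [Set.ncard_def, Set.ncard_def, basis_encard_eq hJ' hI]
  exact hc ▸ Set.ncard_le_ncard hJJ' (hE.subset hJ'.indep.subset_ground)

lemma mrk_closure_eq (hE : M.E.Finite) (hX : X ⊆ M.E) : mrk M (M.closure X) = mrk M X := by
  obtain ⟨I, hI⟩ := M.exists_isBasis X hX
  rw [mrk_eq_of_basis hE hI.isBasis_closure_right, mrk_eq_of_basis hE hI]

lemma mrk_pair (hE : M.E.Finite) (hs : Simple M) (he : e ∈ M.E) (hf : f ∈ M.E) (hef : e ≠ f) :
    mrk M {e, f} = 2 := by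
  rw [mrk_eq_of_basis hE (hs e he f hf).isBasis_self, Set.ncard_pair hef]

lemma line_closure_pair (hE : M.E.Finite) (hs : Simple M) (he : e ∈ M.E) (hf : f ∈ M.E)
    (hef : e ≠ f) : M.IsFlat (M.closure {e, f}) ∧ mrk M (M.closure {e, f}) = 2 := by
  have hp : ({e, f} : Set α) ⊆ M.E := by
    rintro x (rfl | rfl) <;> assumption
  exact ⟨closure_flat' M _, by rw [mrk_closure_eq hE hp, mrk_pair hE hs he hf hef]⟩

lemma flat_eq_closure_pair (hE : M.E.Finite) (hs : Simple M) (hF : M.IsFlat F)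
    (h2 : mrk M F = 2) (he : e ∈ F) (hf : f ∈ F) (hef : e ≠ f) :
    F = M.closure {e, f} := by
  have hFE := hF.subset_ground
  have hp : ({e, f} : Set α) ⊆ F := by rintro x (rfl | rfl) <;> assumption
  have hind : M.Indep {e, f} := hs e (hFE he) f (hFE hf)
  refine subset_antisymm ?_ ?_
  · obtain ⟨I, hI, hsub⟩ := hind.subset_isBasis_of_subset hp hFE
    have hIcard : I.ncard = 2 := by rw [← mrk_eq_of_basis hE hI, h2]
    have hIeq : ({e, f} : Set α) = I :=
      Set.eq_of_subset_of_ncard_le hsub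
        (by rw [hIcard, Set.ncard_pair hef]) (hE.subset hI.indep.subset_ground)
    exact hIeq ▸ hI.subset_closure
  · calc M.closure {e, f} ⊆ M.closure F := M.closure_subset_closure hp
      _ = F := hF.closure

lemma line_exists_pair (hE : M.E.Finite) (hF : M.IsFlat F) (h2 : mrk M F = 2) :
    ∃ e f, e ∈ F ∧ f ∈ F ∧ e ≠ f := by
  obtain ⟨I, hI⟩ := M.exists_isBasis F hF.subset_ground
  have hIcard : I.ncard = 2 := by rw [← mrk_eq_of_basis hE hI, h2]
  obtain ⟨e, f, hef, rfl⟩ := Set.ncard_eq_two.mp hIcard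
  exact ⟨e, f, hI.subset (by simp), hI.subset (by simp), hef⟩

lemma line_ncard_ge_two (hE : M.E.Finite) (hF : M.IsFlat F) (h2 : mrk M F = 2) :
    2 ≤ F.ncard := by
  obtain ⟨e, f, he, hf, hef⟩ := line_exists_pair hE hF h2
  calc 2 = ({e, f} : Set α).ncard := (Set.ncard_pair hef).symm
    _ ≤ F.ncard := Set.ncard_le_ncard (by rintro x (rfl | rfl) <;> assumption)
        (hE.subset hF.subset_ground)

lemma line_ncard_le (hE : M.E.Finite) (hr : mrk M M.E = 3) (hc : ∀ e, ¬ Coloop M e)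
    (hF : M.IsFlat F) (h2 : mrk M F = 2) : F.ncard ≤ M.E.ncard - 2 := by
  by_contra hlt
  push_neg at hlt
  have hFE := hF.subset_ground
  have hFfin := hE.subset hFE
  have hFne : F ≠ M.E := by rintro rfl; rw [hr] at h2; omega
  obtain ⟨g, hgE, hgF⟩ : ∃ g, g ∈ M.E ∧ g ∉ F := by
    by_contra h; push_neg at h
    exact hFne (subset_antisymm hFE h)
  have hdiff : (M.E \ F).ncard = M.E.ncard - F.ncard := Set.ncard_diff hFE hFfin
  have hFle : F.ncard ≤ M.E.ncard := Set.ncard_le_ncard hFE hE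
  have hd1 : (M.E \ F).ncard ≤ 1 := by omega
  have hdeq : M.E \ F = {g} := by
    refine Set.eq_singleton_iff_unique_mem.mpr ⟨⟨hgE, hgF⟩, fun x hx => ?_⟩
    by_contra hxg
    have h2le : 2 ≤ (M.E \ F).ncard := by
      calc 2 = ({x, g} : Set α).ncard := (Set.ncard_pair hxg).symm
        _ ≤ (M.E \ F).ncard := Set.ncard_le_ncard
            (by rintro y (rfl | rfl); exacts [hx, ⟨hgE, hgF⟩]) (hE.subset Set.diff_subset)
    omega
  refine hc g ⟨hgE, fun B hB => ?_⟩
  by_contra hgB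
  have hBF : B ⊆ F := by
    intro x hxB
    by_contra hxF
    have : x ∈ M.E \ F := ⟨hB.indep.subset_ground hxB, hxF⟩
    rw [hdeq] at this
    exact hgB (this ▸ hxB)
  have h3 : B.ncard = 3 := by rw [← mrk_eq_of_basis hE hB.isBasis_ground, hr]
  have := ncard_le_mrk hE hB.indep hBF hFE
  omega


end Aux

section Count

variable {M : Matroid α}

lemma lines_finite (hE : M.E.Finite) : {F : Set α | M.IsFlat F ∧ mrk M F = 2}.Finite :=
  hE.finite_subsets.subset fun _ hF => hF.1.subset_ground

lemma t_eq (hE : M.E.Finite) (m : ℕ) [DecidablePred fun F : Set α => F.ncard = m] :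
    t M m = ((lines_finite hE).toFinset.filter (fun F => F.ncard = m)).card := by
  have hset : {F : Set α | M.IsFlat F ∧ mrk M F = 2 ∧ F.ncard = m} =
      ↑((lines_finite hE).toFinset.filter (fun F => F.ncard = m)) := by
    ext F
    simp [Set.Finite.mem_toFinset, and_assoc]
  rw [t, hset, Set.ncard_coe_finset]

lemma pair_count (hE : M.E.Finite) (hs : Simple M) :
    ∑ m ∈ Finset.Icc 2 M.E.ncard, t M m * (m * m - m) =
      M.E.ncard * M.E.ncard - M.E.ncard := by
  classical
  set E' := hE.toFinset with hE'
  have hnE : M.E.ncard = E'.card := Set.ncard_eq_toFinset_card _ hE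
  set Lf := (lines_finite hE).toFinset with hLf
  have hLfmem : ∀ F, F ∈ Lf ↔ M.IsFlat F ∧ mrk M F = 2 := by
    intro F; rw [hLf, Set.Finite.mem_toFinset]; rfl
  have hmem : ∀ p : α × α, p ∈ E'.offDiag → M.closure {p.1, p.2} ∈ Lf := by
    intro p hp
    rw [Finset.mem_offDiag] at hp
    rw [hLfmem]
    exact line_closure_pair hE hs (hE.mem_toFinset.mp hp.1) (hE.mem_toFinset.mp hp.2.1) hp.2.2
  have step2 := Finset.card_eq_sum_card_fiberwise hmem
  have step3 : ∀ F ∈ Lf, (E'.offDiag.filter (fun p => M.closure {p.1, p.2} = F)).card =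
      F.ncard * F.ncard - F.ncard := by
    intro F hF
    obtain ⟨hFflat, hFmrk⟩ := (hLfmem F).mp hF
    have hFfin : F.Finite := hE.subset hFflat.subset_ground
    have hfe : E'.offDiag.filter (fun p => M.closure {p.1, p.2} = F) =
        hFfin.toFinset.offDiag := by
      ext p
      simp only [Finset.mem_filter, Finset.mem_offDiag, Set.Finite.mem_toFinset]
      constructor
      · rintro ⟨⟨h1, h2, hne⟩, hcl⟩
        have hsub : ({p.1, p.2} : Set α) ⊆ M.E := by
          rintro x (rfl | rfl)
          exacts [hE.mem_toFinset.mp h1, hE.mem_toFinset.mp h2]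
        have hsc := M.subset_closure _ hsub
        rw [hcl] at hsc
        exact ⟨hsc (by simp), hsc (by simp), hne⟩
      · rintro ⟨h1, h2, hne⟩
        refine ⟨⟨hE.mem_toFinset.mpr (hFflat.subset_ground h1),
          hE.mem_toFinset.mpr (hFflat.subset_ground h2), hne⟩,
          (flat_eq_closure_pair hE hs hFflat hFmrk h1 h2 hne).symm⟩
    rw [hfe, Finset.offDiag_card, ← Set.ncard_eq_toFinset_card _ hFfin]
  have step4 : ∑ F ∈ Lf, (F.ncard * F.ncard - F.ncard) =
      M.E.ncard * M.E.ncard - M.E.ncard := by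
    rw [hnE, ← Finset.offDiag_card, step2]
    exact (Finset.sum_congr rfl step3).symm
  have hmaps : ∀ F ∈ Lf, F.ncard ∈ Finset.Icc 2 M.E.ncard := by
    intro F hF
    obtain ⟨hFflat, hFmrk⟩ := (hLfmem F).mp hF
    exact Finset.mem_Icc.mpr ⟨line_ncard_ge_two hE hFflat hFmrk,
      Set.ncard_le_ncard hFflat.subset_ground hE⟩
  have step5 := Finset.sum_fiberwise_of_maps_to hmaps
    (fun F => F.ncard * F.ncard - F.ncard)
  rw [← step4, ← step5]
  refine Finset.sum_congr rfl fun m _ => ?_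
  rw [t_eq hE m]
  refine Eq.symm ?_
  calc ∑ F ∈ Lf.filter (fun F => F.ncard = m), (F.ncard * F.ncard - F.ncard)
      = ∑ _F ∈ Lf.filter (fun F => F.ncard = m), (m * m - m) :=
        Finset.sum_congr rfl (fun F hF => by rw [(Finset.mem_filter.mp hF).2])
    _ = (Lf.filter (fun F => F.ncard = m)).card * (m * m - m) := by
        rw [Finset.sum_const, smul_eq_mul]
    _ = _ := by congr 1

end Count

section Unif

variable {M : Matroid α} {F I : Set α} {e f g : α}

lemma uniform_line_ncard (hE : M.E.Finite) (hu : IsUniform M 3) (hF : M.IsFlat F)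
    (h2 : mrk M F = 2) : F.ncard = 2 := by
  obtain ⟨I, hI⟩ := M.exists_isBasis F hF.subset_ground
  have hIcard : I.ncard = 2 := by rw [← mrk_eq_of_basis hE hI, h2]
  have hIF : I ⊆ F := hI.subset
  have hFI : F ⊆ I := by
    intro g hg
    by_contra hgI
    have hfinI : I.Finite := hE.subset hI.indep.subset_ground
    have hsub : insert g I ⊆ F := Set.insert_subset hg hIF
    have hsubE : insert g I ⊆ M.E := hsub.trans hF.subset_ground
    have h3 : (insert g I).ncard = 3 := by
      rw [Set.ncard_insert_of_notMem hgI hfinI, hIcard]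
    have hind : M.Indep (insert g I) :=
      (hu _ hsubE).mpr ⟨hE.subset hsubE, by omega⟩
    have hle := ncard_le_mrk hE hind hsub hF.subset_ground
    rw [h3, h2] at hle
    omega
  rw [subset_antisymm hFI hIF]
  exact hIcard

lemma all_lines_two_uniform (hE : M.E.Finite) (hs : Simple M) (hr : mrk M M.E = 3)
    (hl : ∀ F, M.IsFlat F → mrk M F = 2 → F.ncard = 2) : IsUniform M 3 := by
  intro I hIE
  constructor
  · intro hind
    refine ⟨hE.subset hIE, ?_⟩
    have := ncard_le_mrk hE hind hIE (subset_refl M.E)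
    rwa [hr] at this
  · rintro ⟨hfin, hcard⟩
    rcases I.eq_empty_or_nonempty with rfl | ⟨e, heI⟩
    · exact M.empty_indep
    have heE := hIE heI
    by_cases h1 : I ⊆ {e}
    · have hIe : I = {e} := subset_antisymm h1 (Set.singleton_subset_iff.mpr heI)
      rw [hIe]
      have := hs e heE e heE
      simpa using this
    obtain ⟨f, hfI, hfe⟩ : ∃ f ∈ I, f ≠ e := by
      rcases Set.not_subset.mp h1 with ⟨f, hfI, hf⟩
      exact ⟨f, hfI, by simpa using hf⟩
    have hfE := hIE hfI
    by_cases h2 : I ⊆ {e, f}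
    · exact (hs e heE f hfE).subset h2
    obtain ⟨g, hgI, hg⟩ := Set.not_subset.mp h2
    have hgE := hIE hgI
    simp only [Set.mem_insert_iff, Set.mem_singleton_iff, not_or] at hg
    obtain ⟨hge, hgf⟩ := hg
    have hef : e ≠ f := Ne.symm hfe
    have hsub3 : ({e, f, g} : Set α) ⊆ I := by
      rintro x (rfl | rfl | rfl) <;> assumption
    have hn3 : ({e, f, g} : Set α).ncard = 3 := by
      rw [Set.ncard_insert_of_notMem (by simp [hef, Ne.symm hge]),
        Set.ncard_pair (Ne.symm hgf)]
    have hI3 : ({e, f, g} : Set α) = I :=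
      Set.eq_of_subset_of_ncard_le hsub3 (by omega) hfin
    rw [← hI3]
    have hpind := hs e heE f hfE
    have hline := line_closure_pair hE hs heE hfE hef
    have hcl2 : (M.closure {e, f}).ncard = 2 := hl _ hline.1 hline.2
    have hpsubE : ({e, f} : Set α) ⊆ M.E := by rintro x (rfl | rfl) <;> assumption
    have hpsub : ({e, f} : Set α) ⊆ M.closure {e, f} := M.subset_closure _ hpsubE
    have hcleq : ({e, f} : Set α) = M.closure {e, f} :=
      Set.eq_of_subset_of_ncard_le hpsub
        (by rw [hcl2, Set.ncard_pair hef])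
        (hE.subset (M.closure_subset_ground _))
    have hgcl : g ∉ M.closure {e, f} := by
      rw [← hcleq]
      simp only [Set.mem_insert_iff, Set.mem_singleton_iff, not_or]
      exact ⟨hge, hgf⟩
    have hgp : g ∉ ({e, f} : Set α) := by
      simp only [Set.mem_insert_iff, Set.mem_singleton_iff, not_or]
      exact ⟨hge, hgf⟩
    have hins : M.Indep (insert g {e, f}) :=
      (hpind.insert_indep_iff_of_notMem hgp).mpr ⟨hgE, hgcl⟩
    have hset : ({e, f, g} : Set α) = insert g {e, f} := by
      ext x; simp; tauto
    rw [hset]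
    exact hins

lemma t_zero_of_all_two (hl : ∀ F, M.IsFlat F → mrk M F = 2 → F.ncard = 2) {m : ℕ}
    (hm : m ≠ 2) : t M m = 0 := by
  rw [t]
  convert Set.ncard_empty (Set α)
  rw [Set.eq_empty_iff_forall_notMem]
  rintro F ⟨h1, h2, h3⟩
  exact hm (h3 ▸ hl F h1 h2)

end Unif

end Paper

open Paper

/-- For a simple rank-3 matroid on `n` elements with no coloops,
`(n-2)·c̄₁²(M) ≥ (2n-6)·c̄₂(M)`, with equality iff `M` is the uniform matroid `U_{3,n}`. -/
theorem stmt_9 {α : Type*} (M : Matroid α) (n : ℕ) (hE : M.E.Finite)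
    (hn : M.E.ncard = n) (hs : Simple M) (hr : mrk M M.E = 3)
    (hc : ∀ e, ¬ Coloop M e) :
    (2 * (n : ℤ) - 6) * c2 M ≤ ((n : ℤ) - 2) * c1sq M ∧
      (((n : ℤ) - 2) * c1sq M = (2 * (n : ℤ) - 6) * c2 M ↔ IsUniform M 3) := by
  classical
  subst hn
  set N := M.E.ncard with hN
  have keyN := pair_count hE hs
  have key : ∑ m ∈ Finset.Icc 2 N, ((m : ℤ) * ((m : ℤ) - 1)) * (t M m : ℤ)
      = (N : ℤ) * ((N : ℤ) - 1) := by
    have h1 : ∀ m : ℕ, ((t M m * (m * m - m) : ℕ) : ℤ)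
        = ((m : ℤ) * ((m : ℤ) - 1)) * (t M m : ℤ) := by
      intro m
      have hle : m ≤ m * m := by nlinarith
      rw [Nat.cast_mul, Nat.cast_sub hle]
      push_cast
      ring
    calc ∑ m ∈ Finset.Icc 2 N, ((m : ℤ) * ((m : ℤ) - 1)) * (t M m : ℤ)
        = ∑ m ∈ Finset.Icc 2 N, ((t M m * (m * m - m) : ℕ) : ℤ) :=
          Finset.sum_congr rfl fun m _ => (h1 m).symm
      _ = ((∑ m ∈ Finset.Icc 2 N, t M m * (m * m - m) : ℕ) : ℤ) := (Nat.cast_sum _ _).symm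
      _ = ((N * N - N : ℕ) : ℤ) := by rw [keyN]
      _ = (N : ℤ) * ((N : ℤ) - 1) := by
          have hle : N ≤ N * N := by nlinarith
          rw [Nat.cast_sub hle]
          push_cast
          ring
  have hdiff : ((N : ℤ) - 2) * c1sq M - (2 * (N : ℤ) - 6) * c2 M
      = ∑ m ∈ Finset.Icc 2 N, ((m : ℤ) - 2) * ((N : ℤ) - 1 - (m : ℤ)) * (t M m : ℤ) := by
    rw [c1sq, c2]
    have h1 : ∑ m ∈ Finset.Icc 2 N, ((m : ℤ) - 2) * ((N : ℤ) - 1 - (m : ℤ)) * (t M m : ℤ)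
        = ((N : ℤ) - 2) * (∑ m ∈ Finset.Icc 2 N, (3 * (m : ℤ) - 4) * (t M m : ℤ))
          - (2 * (N : ℤ) - 6) * (∑ m ∈ Finset.Icc 2 N, ((m : ℤ) - 1) * (t M m : ℤ))
          - ∑ m ∈ Finset.Icc 2 N, ((m : ℤ) * ((m : ℤ) - 1)) * (t M m : ℤ) := by
      rw [Finset.mul_sum, Finset.mul_sum, ← Finset.sum_sub_distrib, ← Finset.sum_sub_distrib]
      exact Finset.sum_congr rfl fun m _ => by ring
    rw [h1, key]
    ring
  have hbound : ∀ m, t M m ≠ 0 → 2 ≤ m ∧ m + 2 ≤ N := by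
    intro m h
    rw [t] at h
    obtain ⟨F, hF1, hF2, hF3⟩ := Set.nonempty_of_ncard_ne_zero h
    have ha := line_ncard_ge_two hE hF1 hF2
    have hb := line_ncard_le hE hr hc hF1 hF2
    rw [hF3] at ha hb
    omega
  have hterm : ∀ m ∈ Finset.Icc 2 N,
      (0 : ℤ) ≤ ((m : ℤ) - 2) * ((N : ℤ) - 1 - (m : ℤ)) * (t M m : ℤ) := by
    intro m _
    rcases eq_or_ne (t M m) 0 with h | h
    · simp [h]
    · obtain ⟨h2m, hmn⟩ := hbound m h
      exact mul_nonneg (mul_nonneg (by omega) (by omega)) (by positivity)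
  have hsumnn := Finset.sum_nonneg hterm
  refine ⟨by linarith, ?_, ?_⟩
  · intro heq
    have hsum0 : ∑ m ∈ Finset.Icc 2 N,
        ((m : ℤ) - 2) * ((N : ℤ) - 1 - (m : ℤ)) * (t M m : ℤ) = 0 := by linarith
    have hzero := (Finset.sum_eq_zero_iff_of_nonneg hterm).mp hsum0
    have hl : ∀ F, M.IsFlat F → mrk M F = 2 → F.ncard = 2 := by
      intro F hF1 hF2
      set m := F.ncard with hm
      have htne : t M m ≠ 0 := by
        rw [t]
        have hfin : {F' : Set α | M.IsFlat F' ∧ mrk M F' = 2 ∧ F'.ncard = m}.Finite :=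
          (lines_finite hE).subset fun F' h => ⟨h.1, h.2.1⟩
        exact ((Set.ncard_pos hfin).mpr ⟨F, hF1, hF2, rfl⟩).ne'
      obtain ⟨h2m, hmn⟩ := hbound m htne
      have hmIcc : m ∈ Finset.Icc 2 N := Finset.mem_Icc.mpr ⟨h2m, by omega⟩
      have hz := hzero m hmIcc
      by_contra hne2
      have ht : (0 : ℤ) < (t M m : ℤ) := by exact_mod_cast Nat.pos_of_ne_zero htne
      have hpos : (0 : ℤ) < ((m : ℤ) - 2) * ((N : ℤ) - 1 - (m : ℤ)) * (t M m : ℤ) :=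
        mul_pos (mul_pos (by omega) (by omega)) ht
      linarith
    exact all_lines_two_uniform hE hs hr hl
  · intro hu
    have hl : ∀ F, M.IsFlat F → mrk M F = 2 → F.ncard = 2 :=
      fun F hF1 hF2 => uniform_line_ncard hE hu hF1 hF2
    have hsum0 : ∑ m ∈ Finset.Icc 2 N,
        ((m : ℤ) - 2) * ((N : ℤ) - 1 - (m : ℤ)) * (t M m : ℤ) = 0 := by
      apply Finset.sum_eq_zero
      intro m _
      rcases eq_or_ne m 2 with rfl | hm2
      · norm_num
      · rw [t_zero_of_all_two hl hm2]
        norm_num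
    linarith
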